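/- Let H be the Hilbert transform and define φ_H(t) = sup{‖H‖_{L¹(w)→L^{1,∞}(w)} : [w]_{A₁} ≤ t}. Let w be a weight with σ = w^{-1} and ‖M‖_{L²(σ)→L²(σ)} < ∞. Then ‖Hf‖_{L^{2,∞}(w)} ≤ 2 φ_H(2‖M‖_{L²(σ)→L²(σ)}) ‖f‖_{L²(w)} for all f ∈ L²(w). -/

import Mathlib

open MeasureTheory ENNReal

/-- The Hilbert transform `Hf(x) = p.v. ∫ f(y)/(x-y) dy`. -/
noncomputable def hilbert (f : ℝ → ℝ) (x : ℝ) : ℝ :=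
  Filter.limUnder (nhdsWithin (0:ℝ) (Set.Ioi 0))
    (fun ε => ∫ y in {y : ℝ | ε < |x - y|}, f y / (x - y))

/-- Hardy–Littlewood maximal operator (ℝ≥0∞-valued). -/
noncomputable def MR (f : ℝ → ℝ≥0∞) : ℝ → ℝ≥0∞ := fun x =>
  ⨆ (a : ℝ) (b : ℝ) (_ : a < b) (_ : x ∈ Set.Ico a b),
    (∫⁻ y in Set.Ico a b, f y) / ENNReal.ofReal (b - a)

/-- Maximal operator of a real-valued function. -/
noncomputable def Mreal (f : ℝ → ℝ) : ℝ → ℝ≥0∞ :=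
  MR fun y => ENNReal.ofReal |f y|

/-- Weighted `L²(v)` norm of a real function. -/
noncomputable def l2w (v f : ℝ → ℝ) : ℝ≥0∞ :=
  (∫⁻ x, (ENNReal.ofReal |f x|) ^ 2 * ENNReal.ofReal (v x)) ^ (1/2 : ℝ)

/-- The operator norm `‖M‖_{L²(σ)→L²(σ)}`. -/
noncomputable def Mopnorm (σ : ℝ → ℝ) : ℝ≥0∞ :=
  ⨆ (f : ℝ → ℝ) (_ : l2w σ f ≤ 1),
    (∫⁻ x, (Mreal f x) ^ 2 * ENNReal.ofReal (σ x)) ^ (1/2 : ℝ)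

/-- The `A₁` constant `[w]_{A₁} = ‖Mw/w‖_{L^∞}`. -/
noncomputable def A1const (w : ℝ → ℝ) : ℝ≥0∞ :=
  essSup (fun x => Mreal w x / ENNReal.ofReal (w x)) volume

/-- Weak `L¹(w)` norm. -/
noncomputable def weakL1norm (w g : ℝ → ℝ) : ℝ≥0∞ :=
  ⨆ (α : ℝ) (_ : 0 < α),
    ENNReal.ofReal α * ∫⁻ x in {x : ℝ | α < |g x|}, ENNReal.ofReal (w x)

/-- `L¹(w)` norm. -/
noncomputable def l1w (w f : ℝ → ℝ) : ℝ≥0∞ :=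
  ∫⁻ x, ENNReal.ofReal |f x| * ENNReal.ofReal (w x)

/-- The norm `‖H‖_{L¹(w)→L^{1,∞}(w)}`. -/
noncomputable def Hopnorm (w : ℝ → ℝ) : ℝ≥0∞ :=
  ⨆ (f : ℝ → ℝ) (_ : l1w w f ≤ 1), weakL1norm w (hilbert f)

/-- `φ_H(t) = sup { ‖H‖_{L¹(w)→L^{1,∞}(w)} : [w]_{A₁} ≤ t }`. -/
noncomputable def phiH (t : ℝ≥0∞) : ℝ≥0∞ :=
  ⨆ (w : ℝ → ℝ) (_ : 0 ≤ w) (_ : A1const w ≤ t), Hopnorm w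

/-- Weak `L²(w)` norm. -/
noncomputable def weakL2norm (w g : ℝ → ℝ) : ℝ≥0∞ :=
  ⨆ (α : ℝ) (_ : 0 < α),
    ENNReal.ofReal α * (∫⁻ x in {x : ℝ | α < |g x|}, ENNReal.ofReal (w x)) ^ (1/2 : ℝ)


section AuxLemmas


section Aux
open Set Filter

lemma le_MR {u : ℝ → ℝ≥0∞} {x a b : ℝ} (hab : a < b) (hx : x ∈ Set.Ico a b) :
    (∫⁻ y in Set.Ico a b, u y) / ENNReal.ofReal (b - a) ≤ MR u x := by
  unfold MR
  exact le_iSup_of_le a <| le_iSup_of_le b <| le_iSup_of_le hab <| le_iSup_of_le hx le_rfl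

lemma MR_le_iff {u : ℝ → ℝ≥0∞} {x : ℝ} {c : ℝ≥0∞} :
    MR u x ≤ c ↔ ∀ a b, a < b → x ∈ Set.Ico a b →
      (∫⁻ y in Set.Ico a b, u y) / ENNReal.ofReal (b - a) ≤ c := by
  unfold MR
  simp [iSup_le_iff]

lemma MR_mono {u v : ℝ → ℝ≥0∞} (h : ∀ y, u y ≤ v y) : ∀ x, MR u x ≤ MR v x := by
  intro x
  rw [MR_le_iff]
  intro a b hab hx
  exact le_trans (ENNReal.div_le_div_right (lintegral_mono h) _) (le_MR hab hx)

lemma MR_congr_ae {u v : ℝ → ℝ≥0∞} (h : u =ᵐ[volume] v) : MR u = MR v := by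
  unfold MR
  funext x
  congr! 6 with a b hab hx
  rw [lintegral_congr_ae (ae_restrict_of_ae h)]

lemma MR_const_mul (c : ℝ≥0∞) (hc : c ≠ ⊤) (u : ℝ → ℝ≥0∞) :
    MR (fun x => c * u x) = fun x => c * MR u x := by
  funext x
  unfold MR
  rw [ENNReal.mul_iSup]
  refine iSup_congr fun a => ?_
  rw [ENNReal.mul_iSup]
  refine iSup_congr fun b => ?_
  rw [ENNReal.mul_iSup]
  refine iSup_congr fun hab => ?_
  rw [ENNReal.mul_iSup]
  refine iSup_congr fun hx => ?_
  rw [lintegral_const_mul' c _ hc, mul_div_assoc]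

lemma MR_le_const {u : ℝ → ℝ≥0∞} {c : ℝ≥0∞} (h : ∀ y, u y ≤ c) (x : ℝ) : MR u x ≤ c := by
  rw [MR_le_iff]
  intro a b hab hx
  rw [ENNReal.div_le_iff (by simp [sub_pos.2 hab, hab]) (by simp)]
  calc ∫⁻ y in Set.Ico a b, u y ≤ ∫⁻ _ in Set.Ico a b, c := lintegral_mono h
    _ = c * ENNReal.ofReal (b - a) := by
        rw [lintegral_const, Measure.restrict_apply_univ, Real.volume_Ico]

lemma MR_tsum_le {u : ℕ → ℝ → ℝ≥0∞} (hu : ∀ k, Measurable (u k)) (x : ℝ) :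
    MR (fun y => ∑' k, u k y) x ≤ ∑' k, MR (u k) x := by
  rw [MR_le_iff]
  intro a b hab hx
  rw [lintegral_tsum (fun k => (hu k).aemeasurable)]
  rw [ENNReal.div_eq_inv_mul, ← ENNReal.tsum_mul_left]
  refine ENNReal.tsum_le_tsum fun k => ?_
  rw [← ENNReal.div_eq_inv_mul]
  exact le_MR hab hx

end Aux


lemma MR_eq_rat (u : ℝ → ℝ≥0∞) (x : ℝ) :
    MR u x = ⨆ (p : ℚ) (q : ℚ) (_ : (p:ℝ) < q) (_ : x ∈ Set.Ico (p:ℝ) (q:ℝ)),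
      (∫⁻ y in Set.Ico (p:ℝ) (q:ℝ), u y) / ENNReal.ofReal ((q:ℝ) - (p:ℝ)) := by
  apply le_antisymm
  · rw [MR_le_iff]
    intro a b hab hx
    set T := ⨆ (p : ℚ) (q : ℚ) (_ : (p:ℝ) < q) (_ : x ∈ Set.Ico (p:ℝ) (q:ℝ)),
      (∫⁻ y in Set.Ico (p:ℝ) (q:ℝ), u y) / ENNReal.ofReal ((q:ℝ) - (p:ℝ)) with hT
    set I := ∫⁻ y in Set.Ico a b, u y with hI
    have key : ∀ δ : ℝ, 0 < δ → I / ENNReal.ofReal (b - a + 2*δ) ≤ T := by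
      intro δ hδ
      obtain ⟨p, hp1, hp2⟩ := exists_rat_btwn (show a - δ < a by linarith)
      obtain ⟨q, hq1, hq2⟩ := exists_rat_btwn (show b < b + δ by linarith)
      have hpq : (p:ℝ) < q := by linarith
      have hxpq : x ∈ Set.Ico (p:ℝ) (q:ℝ) := ⟨by linarith [hx.1], by linarith [hx.2]⟩
      have hsub : Set.Ico a b ⊆ Set.Ico (p:ℝ) (q:ℝ) :=
        Set.Ico_subset_Ico (le_of_lt hp2) (le_of_lt hq1)
      have hInt : I ≤ ∫⁻ y in Set.Ico (p:ℝ) (q:ℝ), u y :=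
        lintegral_mono' (Measure.restrict_mono hsub le_rfl) le_rfl
      have hlen : ENNReal.ofReal ((q:ℝ) - (p:ℝ)) ≤ ENNReal.ofReal (b - a + 2*δ) :=
        ENNReal.ofReal_le_ofReal (by linarith)
      calc I / ENNReal.ofReal (b - a + 2*δ)
          ≤ (∫⁻ y in Set.Ico (p:ℝ) (q:ℝ), u y) / ENNReal.ofReal ((q:ℝ) - (p:ℝ)) :=
            ENNReal.div_le_div hInt hlen
        _ ≤ T := le_iSup_of_le p <| le_iSup_of_le q <| le_iSup_of_le hpq <|
            le_iSup_of_le hxpq le_rfl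
    have htend : Filter.Tendsto (fun k : ℕ => I / ENNReal.ofReal (b - a + 2*(1/(k+1)))) Filter.atTop
        (nhds (I / ENNReal.ofReal (b - a))) := by
      have h1 : Filter.Tendsto (fun k : ℕ => b - a + 2*(1/((k:ℝ)+1))) Filter.atTop
          (nhds (b - a)) := by
        have := tendsto_one_div_add_atTop_nhds_zero_nat (𝕜 := ℝ)
        have h2 := this.const_mul (2:ℝ)
        simpa using (tendsto_const_nhds (x := b - a)).add h2
      have h3 : Filter.Tendsto (fun k : ℕ => (ENNReal.ofReal (b - a + 2*(1/((k:ℝ)+1))))⁻¹)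
          Filter.atTop (nhds ((ENNReal.ofReal (b - a))⁻¹)) :=
        ((ENNReal.continuous_ofReal.continuousAt.tendsto).comp h1).inv
      have h4 := ENNReal.Tendsto.const_mul (a := I) h3 (Or.inl (by simp))
      simpa [ENNReal.div_eq_inv_mul, mul_comm] using h4
    exact le_of_tendsto htend (Filter.Eventually.of_forall fun k => key _ (by positivity))
  · refine iSup_le fun p => iSup_le fun q => iSup_le fun hpq => iSup_le fun hx => ?_
    exact le_MR hpq hx

lemma measurable_MR {u : ℝ → ℝ≥0∞} : Measurable (MR u) := by
  have : MR u = fun x => ⨆ (p : ℚ) (q : ℚ),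
      Set.indicator {x : ℝ | (p:ℝ) < q ∧ x ∈ Set.Ico (p:ℝ) (q:ℝ)}
        (fun _ => (∫⁻ y in Set.Ico (p:ℝ) (q:ℝ), u y) / ENNReal.ofReal ((q:ℝ) - (p:ℝ))) x := by
    funext x
    rw [MR_eq_rat]
    refine iSup_congr fun p => iSup_congr fun q => ?_
    by_cases h1 : (p:ℝ) < q
    · by_cases h2 : x ∈ Set.Ico (p:ℝ) (q:ℝ)
      · rw [Set.indicator_of_mem (show x ∈ {x : ℝ | (p:ℝ) < q ∧ x ∈ Set.Ico (p:ℝ) (q:ℝ)} from ⟨h1, h2⟩)]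
        simp [h1, h2]
      · rw [Set.indicator_of_notMem (fun hc => h2 hc.2)]
        simp [h2]
    · rw [Set.indicator_of_notMem (fun hc => h1 hc.1)]
      simp [h1]
  rw [this]
  refine Measurable.iSup fun p => Measurable.iSup fun q => Measurable.indicator
    measurable_const ?_
  by_cases h1 : (p:ℝ) < q
  · simp only [h1, true_and]
    exact measurableSet_Ico
  · simp only [h1, false_and]
    exact MeasurableSet.empty


noncomputable def ennN2 (μ : Measure ℝ) (u : ℝ → ℝ≥0∞) : ℝ≥0∞ :=
  (∫⁻ x, u x ^ 2 ∂μ) ^ (1/2 : ℝ)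

lemma sq_rpow_half (x : ℝ≥0∞) : (x ^ 2) ^ (1/2:ℝ) = x := by
  rw [← ENNReal.rpow_natCast x 2, ← ENNReal.rpow_mul]
  norm_num

lemma rpow_half_sq (x : ℝ≥0∞) : (x ^ (1/2:ℝ)) ^ 2 = x := by
  rw [← ENNReal.rpow_natCast _ 2, ← ENNReal.rpow_mul]
  norm_num

lemma pow_two_rpow (x : ℝ≥0∞) : x ^ (2:ℕ) = x ^ ((2:ℝ)) := by
  rw [← ENNReal.rpow_natCast x 2]
  norm_num

lemma ennN2_const_mul (μ : Measure ℝ) (c : ℝ≥0∞) (hc : c ≠ ⊤) (u : ℝ → ℝ≥0∞) :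
    ennN2 μ (fun x => c * u x) = c * ennN2 μ u := by
  unfold ennN2
  have h : ∀ x, (c * u x) ^ 2 = c^2 * u x ^ 2 := fun x => mul_pow c (u x) 2
  simp_rw [h]
  rw [lintegral_const_mul' _ _ (pow_ne_top hc),
    ENNReal.mul_rpow_of_nonneg _ _ (by norm_num), sq_rpow_half]

lemma ennN2_mono (μ : Measure ℝ) {u v : ℝ → ℝ≥0∞} (h : ∀ x, u x ≤ v x) :
    ennN2 μ u ≤ ennN2 μ v :=
  ENNReal.rpow_le_rpow (lintegral_mono fun x => pow_le_pow_left' (h x) 2) (by norm_num)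

lemma ennN2_tsum_le (μ : Measure ℝ) {u : ℕ → ℝ → ℝ≥0∞} (hu : ∀ k, Measurable (u k)) :
    ennN2 μ (fun x => ∑' k, u k x) ≤ ∑' k, ennN2 μ (u k) := by
  set v : ℕ → ℝ → ℝ≥0∞ := fun m x => ∑ k ∈ Finset.range m, u k x with hv
  have hvm : ∀ m, Measurable (v m) := fun m => Finset.measurable_sum _ (fun k _ => hu k)
  have fin : ∀ m, ennN2 μ (v m) ≤ ∑ k ∈ Finset.range m, ennN2 μ (u k) := by
    intro m
    induction m with
    | zero => simp [ennN2, hv]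
    | succ m ih =>
      have hsplit : ∀ x, v (m+1) x = v m x + u m x := by
        intro x; rw [hv]; simp [Finset.sum_range_succ]
      calc ennN2 μ (v (m+1)) = ennN2 μ (fun x => v m x + u m x) := by
            unfold ennN2; simp_rw [hsplit]
        _ ≤ ennN2 μ (v m) + ennN2 μ (u m) := by
            unfold ennN2
            simp_rw [pow_two_rpow]
            exact ENNReal.lintegral_Lp_add_le (hvm m).aemeasurable (hu m).aemeasurable
              one_le_two
        _ ≤ ∑ k ∈ Finset.range m, ennN2 μ (u k) + ennN2 μ (u m) :=
            add_le_add_left ih _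
        _ = ∑ k ∈ Finset.range (m+1), ennN2 μ (u k) := (Finset.sum_range_succ _ m).symm
  have hmono : ∀ x, Monotone (fun m => v m x) := fun x i j hij =>
    Finset.sum_le_sum_of_subset (Finset.range_subset_range.2 hij)
  have hsup : ∀ x, (∑' k, u k x) = ⨆ m, v m x := fun x => ENNReal.tsum_eq_iSup_nat
  have sqsup : ∀ (a : ℕ → ℝ≥0∞), Monotone a → (⨆ m, a m) ^ 2 = ⨆ m, a m ^ 2 := by
    intro a ha
    apply le_antisymm
    · rw [pow_two, ENNReal.iSup_mul]
      refine iSup_le fun m => ?_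
      rw [ENNReal.mul_iSup]
      refine iSup_le fun k => ?_
      calc a m * a k ≤ a (max m k) * a (max m k) :=
            mul_le_mul' (ha (le_max_left m k)) (ha (le_max_right m k))
        _ = a (max m k) ^ 2 := (pow_two _).symm
        _ ≤ ⨆ m, a m ^ 2 := le_iSup (fun m => a m ^ 2) (max m k)
    · exact iSup_le fun m => pow_le_pow_left' (le_iSup a m) 2
  have hint : (∫⁻ x, (∑' k, u k x) ^ 2 ∂μ) = ⨆ m, ∫⁻ x, v m x ^ 2 ∂μ := by
    have : ∀ x, (∑' k, u k x) ^ 2 = ⨆ m, v m x ^ 2 := by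
      intro x
      rw [hsup x, sqsup _ (hmono x)]
    simp_rw [this]
    exact lintegral_iSup (fun m => (hvm m).pow_const 2)
      (fun i j hij x => pow_le_pow_left' (hmono x hij) 2)
  set R := ∑' k, ennN2 μ (u k) with hR
  unfold ennN2
  rw [hint]
  have h1 : (⨆ m, ∫⁻ x, v m x ^ 2 ∂μ) ≤ R ^ 2 := by
    refine iSup_le fun m => ?_
    have h2 : ennN2 μ (v m) ≤ R := le_trans (fin m) (ENNReal.sum_le_tsum _)
    calc (∫⁻ x, v m x ^ 2 ∂μ) = ennN2 μ (v m) ^ 2 := (rpow_half_sq _).symm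
      _ ≤ R ^ 2 := pow_le_pow_left' h2 2
  calc (⨆ m, ∫⁻ x, v m x ^ 2 ∂μ) ^ (1/2:ℝ) ≤ (R ^ 2) ^ (1/2:ℝ) :=
        ENNReal.rpow_le_rpow h1 (by norm_num)
    _ = R := sq_rpow_half R


-- new material
noncomputable def ennW2 (σ : ℝ → ℝ) (u : ℝ → ℝ≥0∞) : ℝ≥0∞ :=
  (∫⁻ x, u x ^ 2 * ENNReal.ofReal (σ x)) ^ (1/2 : ℝ)

lemma l2w_eq_ennW2 (σ f : ℝ → ℝ) : l2w σ f = ennW2 σ (fun x => ENNReal.ofReal |f x|) := rfl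

lemma Mopnorm_eq (σ : ℝ → ℝ) :
    Mopnorm σ = ⨆ (f : ℝ → ℝ) (_ : l2w σ f ≤ 1), ennW2 σ (Mreal f) := rfl

lemma ennW2_const_mul (σ : ℝ → ℝ) (c : ℝ≥0∞) (hc : c ≠ ⊤) (u : ℝ → ℝ≥0∞) :
    ennW2 σ (fun x => c * u x) = c * ennW2 σ u := by
  unfold ennW2
  have h : ∀ x, (c * u x) ^ 2 * ENNReal.ofReal (σ x)
      = c^2 * (u x ^ 2 * ENNReal.ofReal (σ x)) := fun x => by
    rw [mul_pow, mul_assoc]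
  simp_rw [h]
  rw [lintegral_const_mul' _ _ (pow_ne_top hc),
    ENNReal.mul_rpow_of_nonneg _ _ (by norm_num), sq_rpow_half]

lemma ennW2_mono (σ : ℝ → ℝ) {u v : ℝ → ℝ≥0∞} (h : ∀ x, u x ≤ v x) :
    ennW2 σ u ≤ ennW2 σ v :=
  ENNReal.rpow_le_rpow
    (lintegral_mono fun x => mul_le_mul_left (pow_le_pow_left' (h x) 2) _) (by norm_num)

lemma ennW2_congr_ae (σ : ℝ → ℝ) {u v : ℝ → ℝ≥0∞} (h : u =ᵐ[volume] v) :
    ennW2 σ u = ennW2 σ v := by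
  unfold ennW2
  congr 1
  refine lintegral_congr_ae ?_
  filter_upwards [h] with x hx
  rw [hx]

lemma ennW2_eq_ennN2 {σ : ℝ → ℝ} (hσ : Measurable σ) {u : ℝ → ℝ≥0∞} (hu : Measurable u) :
    ennW2 σ u = ennN2 (volume.withDensity fun x => ENNReal.ofReal (σ x)) u := by
  unfold ennW2 ennN2
  congr 1
  rw [lintegral_withDensity_eq_lintegral_mul volume hσ.ennreal_ofReal (hu.pow_const 2)]
  exact lintegral_congr fun x => (mul_comm _ _)

lemma ennW2_tsum_le {σ : ℝ → ℝ} (hσ : Measurable σ) {u : ℕ → ℝ → ℝ≥0∞}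
    (hu : ∀ k, Measurable (u k)) :
    ennW2 σ (fun x => ∑' k, u k x) ≤ ∑' k, ennW2 σ (u k) := by
  rw [ennW2_eq_ennN2 hσ (by exact Measurable.ennreal_tsum hu)]
  refine le_trans (ennN2_tsum_le _ hu) ?_
  exact ENNReal.tsum_le_tsum fun k => le_of_eq (ennW2_eq_ennN2 hσ (hu k)).symm

lemma Mreal_const_mul (r : ℝ) (f : ℝ → ℝ) :
    Mreal (fun x => r * f x) = fun x => ENNReal.ofReal |r| * Mreal f x := by
  unfold Mreal
  have h : (fun y => ENNReal.ofReal |r * f y|)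
      = fun y => ENNReal.ofReal |r| * ENNReal.ofReal |f y| := by
    funext y
    rw [abs_mul, ENNReal.ofReal_mul (abs_nonneg r)]
  rw [h, MR_const_mul _ ENNReal.ofReal_ne_top]

lemma l2w_const_mul (σ : ℝ → ℝ) (r : ℝ) (f : ℝ → ℝ) :
    l2w σ (fun x => r * f x) = ENNReal.ofReal |r| * l2w σ f := by
  rw [l2w_eq_ennW2, l2w_eq_ennW2]
  have h : (fun x => ENNReal.ofReal |r * f x|)
      = fun x => ENNReal.ofReal |r| * ENNReal.ofReal |f x| := by
    funext y
    rw [abs_mul, ENNReal.ofReal_mul (abs_nonneg r)]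
  rw [h, ennW2_const_mul _ _ ENNReal.ofReal_ne_top]

lemma le_Mopnorm {σ : ℝ → ℝ} {f : ℝ → ℝ} (h : l2w σ f ≤ 1) :
    ennW2 σ (Mreal f) ≤ Mopnorm σ := by
  rw [Mopnorm_eq]
  exact le_iSup_of_le f (le_iSup_of_le h le_rfl)

/-- The operator norm bound for arbitrary real `f`. -/
lemma ennW2_Mreal_le {σ : ℝ → ℝ} (hM : Mopnorm σ < ⊤) (hN : Mopnorm σ ≠ 0) (f : ℝ → ℝ) :
    ennW2 σ (Mreal f) ≤ Mopnorm σ * l2w σ f := by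
  rcases eq_or_ne (l2w σ f) 0 with h0 | h0
  · rw [h0, mul_zero]
    by_contra hX
    have hX' : ennW2 σ (Mreal f) ≠ 0 := fun h => hX (le_of_eq h)
    set X := ennW2 σ (Mreal f) with hXdef
    have key : ∀ r : ℝ, 0 ≤ r → ENNReal.ofReal r * X ≤ Mopnorm σ := by
      intro r hr
      have h1 : l2w σ (fun x => r * f x) ≤ 1 := by
        rw [l2w_const_mul, h0, mul_zero]; exact zero_le_one
      have h2 := le_Mopnorm h1
      rwa [Mreal_const_mul, ennW2_const_mul _ _ ENNReal.ofReal_ne_top,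
        abs_of_nonneg hr] at h2
    rcases eq_or_ne X ⊤ with hT | hT
    · have := key 1 zero_le_one
      rw [hT] at this
      simp at this
      exact absurd (le_of_eq this.symm) (not_le.2 hM)
    · have hXpos : 0 < X.toReal := ENNReal.toReal_pos hX' hT
      set r := ((Mopnorm σ).toReal + 1) / X.toReal with hr
      have hrpos : 0 ≤ r := by positivity
      have h3 := key r hrpos
      have h4 : ENNReal.ofReal r * X = ENNReal.ofReal ((Mopnorm σ).toReal + 1) := by
        rw [← ENNReal.ofReal_toReal hT, ← ENNReal.ofReal_mul hrpos, hr,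
          div_mul_cancel₀ _ (ne_of_gt hXpos)]
      rw [h4] at h3
      have h5 : Mopnorm σ < ENNReal.ofReal ((Mopnorm σ).toReal + 1) := by
        calc Mopnorm σ = ENNReal.ofReal ((Mopnorm σ).toReal) :=
              (ENNReal.ofReal_toReal (ne_of_lt hM)).symm
          _ < ENNReal.ofReal ((Mopnorm σ).toReal + 1) :=
              (ENNReal.ofReal_lt_ofReal_iff (by positivity)).2 (by linarith)
      exact absurd h3 (not_le.2 h5)
  rcases eq_or_ne (l2w σ f) ⊤ with hT | hT
  · rw [hT, ENNReal.mul_top hN]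
    exact le_top
  · set c := (l2w σ f).toReal with hc
    have hcpos : 0 < c := ENNReal.toReal_pos h0 hT
    have h1 : l2w σ (fun x => c⁻¹ * f x) ≤ 1 := by
      rw [l2w_const_mul, abs_of_nonneg (le_of_lt (inv_pos.2 hcpos)),
        ← ENNReal.ofReal_toReal hT, ← hc, ← ENNReal.ofReal_mul (le_of_lt (inv_pos.2 hcpos)),
        inv_mul_cancel₀ (ne_of_gt hcpos), ENNReal.ofReal_one]
    have h2 := le_Mopnorm h1
    rw [Mreal_const_mul, ennW2_const_mul _ _ ENNReal.ofReal_ne_top,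
      abs_of_nonneg (le_of_lt (inv_pos.2 hcpos))] at h2
    have h3 : ENNReal.ofReal c * (ENNReal.ofReal c⁻¹ * ennW2 σ (Mreal f))
        ≤ ENNReal.ofReal c * Mopnorm σ := mul_le_mul_right h2 _
    rw [← mul_assoc, ← ENNReal.ofReal_mul (le_of_lt hcpos),
      mul_inv_cancel₀ (ne_of_gt hcpos), ENNReal.ofReal_one, one_mul] at h3
    rw [mul_comm (Mopnorm σ) _, ← ENNReal.ofReal_toReal hT, ← hc]
    exact h3


section Chunk5

/-- Monotonicity of the restricted integral in the set. -/
lemma setLIntegral_mono_set {u : ℝ → ℝ≥0∞} {A B : Set ℝ} (h : A ⊆ B) :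
    ∫⁻ y in A, u y ≤ ∫⁻ y in B, u y :=
  lintegral_mono' (Measure.restrict_mono h le_rfl) le_rfl

/-- Positivity of integrals of positive functions on positive measure sets. -/
lemma setLIntegral_pos {A : Set ℝ} (hA : MeasurableSet A) (hApos : 0 < volume A)
    {g : ℝ → ℝ≥0∞} (hg : Measurable g) (hgpos : ∀ x ∈ A, 0 < g x) :
    0 < ∫⁻ x in A, g x := by
  rcases eq_or_ne (∫⁻ x in A, g x) 0 with h0 | h0
  · exfalso
    have h1 : g =ᵐ[volume.restrict A] 0 := (lintegral_eq_zero_iff hg).1 h0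
    have h2 : ∀ᵐ x ∂volume, x ∈ A → g x = 0 := (ae_restrict_iff' hA).1 h1
    have h3 : ∀ᵐ x ∂volume, x ∉ A := by
      filter_upwards [h2] with x hx
      intro hxA
      exact absurd (hx hxA) (ne_of_gt (hgpos x hxA))
    rw [← measure_eq_zero_iff_ae_notMem] at h3
    exact absurd h3 (ne_of_gt hApos)
  · exact pos_iff_ne_zero.2 h0

/-- Every point is in some `Ico (-m) m ∩ {g ≤ m}` piece; one has positive measure. -/
lemma exists_pos_piece {P : Set ℝ} (hP : MeasurableSet P) (hPpos : 0 < volume P)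
    (g : ℝ → ℝ) :
    ∃ m : ℕ, 0 < volume (P ∩ Set.Ico (-(m:ℝ)) m ∩ {x | g x ≤ m}) := by
  by_contra hcon
  push_neg at hcon
  have hcov : P ⊆ ⋃ m : ℕ, (P ∩ Set.Ico (-(m:ℝ)) m ∩ {x | g x ≤ m}) := by
    intro x hx
    obtain ⟨m, hm⟩ := exists_nat_gt (max |x| (g x))
    refine Set.mem_iUnion.2 ⟨m, ⟨hx, ?_, ?_⟩, ?_⟩
    · have := (abs_lt.1 (lt_of_le_of_lt (le_max_left _ _) hm)).1
      linarith
    · exact (abs_lt.1 (lt_of_le_of_lt (le_max_left _ _) hm)).2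
    · exact le_of_lt (lt_of_le_of_lt (le_max_right _ _) hm)
  have : volume P ≤ ∑' m : ℕ, volume (P ∩ Set.Ico (-(m:ℝ)) m ∩ {x | g x ≤ m}) :=
    le_trans (measure_mono hcov) (measure_iUnion_le _)
  have h0 : ∀ m : ℕ, volume (P ∩ Set.Ico (-(m:ℝ)) m ∩ {x | g x ≤ m}) = 0 :=
    fun m => le_antisymm (hcon m) (zero_le)
  rw [tsum_congr h0] at this
  simp at this
  exact absurd this (ne_of_gt hPpos)

/-- Lower bound for `MR` on a fixed window. -/
lemma MR_window {u : ℝ → ℝ≥0∞} {A : Set ℝ} {K : ℝ} (hK : 0 < K)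
    (hAsub : A ⊆ Set.Ico (-K) K) {x : ℝ} (hx : x ∈ Set.Ico (-K) K) :
    (∫⁻ y in A, u y) / ENNReal.ofReal (2*K) ≤ MR u x := by
  have h1 : (∫⁻ y in A, u y) ≤ ∫⁻ y in Set.Ico (-K) K, u y := setLIntegral_mono_set hAsub
  have h2 : (2:ℝ)*K = K - (-K) := by ring
  rw [h2]
  exact le_trans (ENNReal.div_le_div h1 le_rfl) (le_MR (by linarith) hx)

/-- Lebesgue density: a.e. point of a measurable set has maximal function ≥ 1. -/
lemma one_le_MR_indicator {S : Set ℝ} (hS : MeasurableSet S) :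
    ∀ᵐ x ∂(volume : Measure ℝ), x ∈ S → 1 ≤ MR (S.indicator fun _ => 1) x := by
  have h := Besicovitch.ae_tendsto_measure_inter_div (volume : Measure ℝ) S
  rw [ae_restrict_iff' hS] at h
  · filter_upwards [h] with x hx hxS
    have key : ∀ r : ℝ, 0 < r →
        volume (S ∩ Metric.closedBall x r) / volume (Metric.closedBall x r)
          ≤ MR (S.indicator fun _ => 1) x := by
      intro r hr
      have hico : ∫⁻ y in Set.Ico (x - r) (x + r), S.indicator (fun _ => (1:ℝ≥0∞)) y
          = volume (S ∩ Set.Ico (x - r) (x + r)) := by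
        rw [lintegral_indicator hS]
        simp [Measure.restrict_restrict hS]
      have hmeas : volume (S ∩ Metric.closedBall x r) ≤ volume (S ∩ Set.Ico (x - r) (x + r)) := by
        rw [Real.closedBall_eq_Icc]
        have hsub : S ∩ Set.Icc (x - r) (x + r) ⊆ (S ∩ Set.Ico (x - r) (x + r)) ∪ {x + r} := by
          rintro y ⟨hyS, hy1, hy2⟩
          rcases lt_or_eq_of_le hy2 with h' | h'
          · exact Or.inl ⟨hyS, hy1, h'⟩
          · exact Or.inr (by simp [h'])
        calc volume (S ∩ Set.Icc (x - r) (x + r))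
            ≤ volume ((S ∩ Set.Ico (x - r) (x + r)) ∪ {x + r}) := measure_mono hsub
          _ ≤ volume (S ∩ Set.Ico (x - r) (x + r)) + volume ({x + r} : Set ℝ) :=
              measure_union_le _ _
          _ = volume (S ∩ Set.Ico (x - r) (x + r)) := by simp
      have hball : volume (Metric.closedBall x r) = ENNReal.ofReal ((x + r) - (x - r)) := by
        rw [Real.volume_closedBall]
        congr 1
        ring
      calc volume (S ∩ Metric.closedBall x r) / volume (Metric.closedBall x r)
          ≤ (∫⁻ y in Set.Ico (x - r) (x + r), S.indicator (fun _ => (1:ℝ≥0∞)) y)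
              / ENNReal.ofReal ((x + r) - (x - r)) := by
            rw [hico, hball]
            exact ENNReal.div_le_div hmeas le_rfl
        _ ≤ MR (S.indicator fun _ => 1) x :=
            le_MR (by linarith) ⟨by linarith, by linarith⟩
    exact le_of_tendsto (hx hxS) (eventually_nhdsWithin_of_forall fun r hr => key r hr)

/-- Restriction to a measurable hull agrees with restriction to the set. -/
lemma restrict_hull {μ : Measure ℝ} {s G : Set ℝ} (hG : MeasurableSet G) (hsub : s ⊆ G)
    (hvol : μ G = μ s) (hfin : μ s ≠ ⊤) : μ.restrict G = μ.restrict s := by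
  refine le_antisymm ?_ (Measure.restrict_mono hsub le_rfl)
  refine Measure.le_intro fun A hA _ => ?_
  rw [Measure.restrict_apply hA, Measure.restrict_apply hA]
  have h1 : μ (G ∩ A) + μ (G \ A) = μ G := measure_inter_add_diff G hA
  have h2 : μ s ≤ μ (s ∩ A) + μ (s \ A) := measure_le_inter_add_diff μ s A
  have h3 : μ (s \ A) ≤ μ (G \ A) := measure_mono (Set.diff_subset_diff_left hsub)
  have h4 : μ (G ∩ A) + μ (G \ A) ≤ μ (s ∩ A) + μ (G \ A) := by
    rw [h1, hvol]
    exact le_trans h2 (add_le_add_right h3 _)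
  have h5 : μ (G \ A) ≠ ⊤ := by
    refine ne_of_lt (lt_of_le_of_lt (measure_mono Set.diff_subset) ?_)
    rw [hvol]
    exact lt_top_iff_ne_top.2 hfin
  have := ENNReal.le_of_add_le_add_right h5 h4
  rwa [Set.inter_comm A G, Set.inter_comm A s]

end Chunk5

lemma ennW2_mono_ae (σ : ℝ → ℝ) {u v : ℝ → ℝ≥0∞} (h : ∀ᵐ x ∂(volume : Measure ℝ), u x ≤ v x) :
    ennW2 σ u ≤ ennW2 σ v := by
  refine ENNReal.rpow_le_rpow (lintegral_mono_ae ?_) (by norm_num)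
  filter_upwards [h] with x hx
  exact mul_le_mul_left (pow_le_pow_left' hx 2) _

lemma ennW2_Mreal_zero {σ : ℝ → ℝ} (hM : Mopnorm σ < ⊤) {f : ℝ → ℝ} (h0 : l2w σ f = 0) :
    ennW2 σ (Mreal f) = 0 := by
  by_contra hX'
  set X := ennW2 σ (Mreal f) with hXdef
  have key : ∀ r : ℝ, 0 ≤ r → ENNReal.ofReal r * X ≤ Mopnorm σ := by
    intro r hr
    have h1 : l2w σ (fun x => r * f x) ≤ 1 := by
      rw [l2w_const_mul, h0, mul_zero]; exact zero_le_one
    have h2 := le_Mopnorm h1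
    rwa [Mreal_const_mul, ennW2_const_mul _ _ ENNReal.ofReal_ne_top,
      abs_of_nonneg hr] at h2
  rcases eq_or_ne X ⊤ with hT | hT
  · have := key 1 zero_le_one
    rw [hT] at this
    simp at this
    exact absurd (le_of_eq this.symm) (not_le.2 hM)
  · have hXpos : 0 < X.toReal := ENNReal.toReal_pos hX' hT
    set r := ((Mopnorm σ).toReal + 1) / X.toReal with hr
    have hrpos : 0 ≤ r := by positivity
    have h3 := key r hrpos
    have h4 : ENNReal.ofReal r * X = ENNReal.ofReal ((Mopnorm σ).toReal + 1) := by
      rw [← ENNReal.ofReal_toReal hT, ← ENNReal.ofReal_mul hrpos, hr,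
        div_mul_cancel₀ _ (ne_of_gt hXpos)]
    rw [h4] at h3
    have h5 : Mopnorm σ < ENNReal.ofReal ((Mopnorm σ).toReal + 1) := by
      calc Mopnorm σ = ENNReal.ofReal ((Mopnorm σ).toReal) :=
            (ENNReal.ofReal_toReal (ne_of_lt hM)).symm
        _ < ENNReal.ofReal ((Mopnorm σ).toReal + 1) :=
            (ENNReal.ofReal_lt_ofReal_iff (by positivity)).2 (by linarith)
    exact absurd h3 (not_le.2 h5)

lemma indicator_ofReal_abs (S : Set ℝ) :
    (fun y => ENNReal.ofReal |S.indicator (fun _ => (1:ℝ)) y|)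
      = S.indicator (fun _ => (1:ℝ≥0∞)) := by
  funext y
  by_cases hy : y ∈ S
  · simp [Set.indicator_of_mem hy]
  · simp [Set.indicator_of_notMem hy]

lemma l2w_indicator {σ : ℝ → ℝ} {S : Set ℝ} (hS : MeasurableSet S) :
    l2w σ (S.indicator fun _ => (1:ℝ)) = (∫⁻ x in S, ENNReal.ofReal (σ x)) ^ (1/2:ℝ) := by
  unfold l2w
  congr 1
  have h : ∀ x, (ENNReal.ofReal |S.indicator (fun _ => (1:ℝ)) x|) ^ 2 * ENNReal.ofReal (σ x)
      = S.indicator (fun y => ENNReal.ofReal (σ y)) x := by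
    intro x
    by_cases hx : x ∈ S
    · simp [Set.indicator_of_mem hx]
    · simp [Set.indicator_of_notMem hx]
  simp_rw [h]
  exact lintegral_indicator hS _

lemma setLIntegral_indicator_self {S : Set ℝ} (hS : MeasurableSet S) :
    ∫⁻ y in S, S.indicator (fun _ => (1:ℝ≥0∞)) y = volume S := by
  rw [setLIntegral_congr_fun hS
    (fun y hy => Set.indicator_of_mem hy _)]
  exact setLIntegral_one S

lemma Mopnorm_ge_one {σ : ℝ → ℝ} (hσm : Measurable σ)
    (hσpos : ∀ᵐ x ∂(volume : Measure ℝ), 0 < σ x) :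
    1 ≤ Mopnorm σ := by
  set P := {x : ℝ | 0 < σ x} with hPdef
  have hPmeas : MeasurableSet P := measurableSet_lt measurable_const hσm
  have hPpos : 0 < volume P := by
    have hc : volume Pᶜ = 0 := by
      rw [measure_eq_zero_iff_ae_notMem]
      filter_upwards [hσpos] with x hx
      simp [hPdef, hx]
    have h2 : (volume : Measure ℝ) Set.univ ≤ volume P + volume Pᶜ := by
      rw [← Set.union_compl_self P]; exact measure_union_le _ _
    rw [hc, add_zero, Real.volume_univ] at h2
    rw [top_le_iff.mp h2]
    exact ENNReal.zero_lt_top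
  obtain ⟨m, hm⟩ := exists_pos_piece hPmeas hPpos σ
  set S := P ∩ Set.Ico (-(m:ℝ)) m ∩ {x | σ x ≤ m} with hSdef
  have hSmeas : MeasurableSet S :=
    (hPmeas.inter measurableSet_Ico).inter (hσm measurableSet_Iic)
  set f₀ := S.indicator (fun _ => (1:ℝ)) with hf₀
  set J := ∫⁻ x in S, ENNReal.ofReal (σ x) with hJ
  have hl2 : l2w σ f₀ = J ^ (1/2:ℝ) := l2w_indicator hSmeas
  have hJpos : 0 < J :=
    setLIntegral_pos hSmeas hm hσm.ennreal_ofReal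
      (fun x hx => ENNReal.ofReal_pos.2 hx.1.1)
  have hJfin : J < ⊤ := by
    have h1 : J ≤ ENNReal.ofReal m * volume S := by
      rw [hJ, ← setLIntegral_const S (ENNReal.ofReal m)]
      refine lintegral_mono_ae ?_
      rw [ae_restrict_iff' hSmeas]
      exact Filter.Eventually.of_forall fun x hx => ENNReal.ofReal_le_ofReal hx.2
    have h2 : volume S ≤ volume (Set.Ico (-(m:ℝ)) m) :=
      measure_mono fun x hx => hx.1.2
    refine lt_of_le_of_lt h1 (lt_of_le_of_lt (mul_le_mul_right h2 _) ?_)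
    rw [Real.volume_Ico]
    exact ENNReal.mul_lt_top ENNReal.ofReal_lt_top ENNReal.ofReal_lt_top
  have hl2pos : 0 < l2w σ f₀ := by
    rw [hl2]
    rw [pos_iff_ne_zero]
    intro h0
    rcases (ENNReal.rpow_eq_zero_iff).1 h0 with ⟨h1, _⟩ | ⟨_, h2⟩
    · exact absurd h1 (ne_of_gt hJpos)
    · norm_num at h2
  have hl2fin : l2w σ f₀ < ⊤ := by
    rw [hl2]
    exact ENNReal.rpow_lt_top_of_nonneg (by norm_num) (ne_of_lt hJfin)
  have hdens : ∀ᵐ x ∂(volume : Measure ℝ),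
      ENNReal.ofReal |f₀ x| ≤ Mreal f₀ x := by
    filter_upwards [one_le_MR_indicator hSmeas] with x hx
    by_cases hxS : x ∈ S
    · have h1 : ENNReal.ofReal |f₀ x| = 1 := by
        simp [hf₀, Set.indicator_of_mem hxS]
      rw [h1]
      unfold Mreal
      rw [indicator_ofReal_abs]
      exact hx hxS
    · have h1 : ENNReal.ofReal |f₀ x| = 0 := by
        simp [hf₀, Set.indicator_of_notMem hxS]
      rw [h1]
      exact zero_le
  have hlow : l2w σ f₀ ≤ ennW2 σ (Mreal f₀) := by
    rw [l2w_eq_ennW2]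
    exact ennW2_mono_ae σ hdens
  set c := (l2w σ f₀).toReal with hc
  have hcpos : 0 < c := ENNReal.toReal_pos (ne_of_gt hl2pos) (ne_of_lt hl2fin)
  have hinv : (0:ℝ) ≤ c⁻¹ := le_of_lt (inv_pos.2 hcpos)
  have hl21 : l2w σ (fun x => c⁻¹ * f₀ x) = 1 := by
    rw [l2w_const_mul, abs_of_nonneg hinv, ← ENNReal.ofReal_toReal (ne_of_lt hl2fin), ← hc,
      ← ENNReal.ofReal_mul hinv, inv_mul_cancel₀ (ne_of_gt hcpos), ENNReal.ofReal_one]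
  calc (1:ℝ≥0∞) = ENNReal.ofReal c⁻¹ * l2w σ f₀ := by
        rw [← ENNReal.ofReal_toReal (ne_of_lt hl2fin), ← hc, ← ENNReal.ofReal_mul hinv,
          inv_mul_cancel₀ (ne_of_gt hcpos), ENNReal.ofReal_one]
    _ ≤ ENNReal.ofReal c⁻¹ * ennW2 σ (Mreal f₀) := mul_le_mul_right hlow _
    _ = ennW2 σ (Mreal (fun x => c⁻¹ * f₀ x)) := by
        rw [Mreal_const_mul, ennW2_const_mul _ _ ENNReal.ofReal_ne_top,
          abs_of_nonneg hinv]
    _ ≤ Mopnorm σ := le_Mopnorm (le_of_eq hl21)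

lemma w_dichotomy {w σ : ℝ → ℝ} (hw : 0 ≤ w) (hwm : Measurable w)
    (hσ : σ = fun x => (w x)⁻¹) (hM : Mopnorm σ < ⊤) :
    (∀ᵐ x ∂(volume : Measure ℝ), w x = 0) ∨ (∀ᵐ x ∂(volume : Measure ℝ), 0 < w x) := by
  have hσm : Measurable σ := by rw [hσ]; exact hwm.inv
  by_cases hz : volume {x : ℝ | ¬ w x = 0} = 0
  · exact Or.inl (ae_iff.2 hz)
  by_cases hp : volume {x : ℝ | ¬ 0 < w x} = 0
  · exact Or.inr (ae_iff.2 hp)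
  exfalso
  -- both the zero set and positive set have positive measure
  have hZeq : {x : ℝ | ¬ 0 < w x} = {x : ℝ | w x = 0} :=
    Set.ext fun x => ⟨fun hx => le_antisymm (not_lt.1 hx) (hw x),
      fun hx => not_lt.2 (le_of_eq hx)⟩
  have hZmeas : MeasurableSet {x : ℝ | w x = 0} := hwm (measurableSet_singleton 0)
  have hZpos : 0 < volume {x : ℝ | w x = 0} := by
    rw [← hZeq]
    exact pos_iff_ne_zero.2 hp
  have hPeq : {x : ℝ | ¬ w x = 0} = {x : ℝ | 0 < w x} :=
    Set.ext fun x => ⟨fun hx => lt_of_le_of_ne (hw x) (Ne.symm hx),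
      fun hx hx0 => (ne_of_gt hx) hx0⟩
  have hPmeas : MeasurableSet {x : ℝ | 0 < w x} := measurableSet_lt measurable_const hwm
  have hPpos : 0 < volume {x : ℝ | 0 < w x} := by
    rw [← hPeq]
    exact pos_iff_ne_zero.2 hz
  obtain ⟨m, hm⟩ := exists_pos_piece hZmeas hZpos w
  obtain ⟨k, hk⟩ := exists_pos_piece hPmeas hPpos w
  set Z := {x : ℝ | w x = 0} ∩ Set.Ico (-(m:ℝ)) m ∩ {x | w x ≤ m} with hZdef
  set Pk := {x : ℝ | 0 < w x} ∩ Set.Ico (-(k:ℝ)) k ∩ {x | w x ≤ k} with hPkdef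
  have hZm : MeasurableSet Z :=
    (hZmeas.inter measurableSet_Ico).inter (hwm measurableSet_Iic)
  have hPk : MeasurableSet Pk :=
    (hPmeas.inter measurableSet_Ico).inter (hwm measurableSet_Iic)
  set f₀ := Z.indicator (fun _ => (1:ℝ)) with hf₀
  -- l2w σ f₀ = 0 since σ = 0 on Z
  have hl2z : l2w σ f₀ = 0 := by
    rw [l2w_indicator hZm]
    have h1 : ∫⁻ x in Z, ENNReal.ofReal (σ x) = 0 := by
      have heq : ∀ x ∈ Z, ENNReal.ofReal (σ x) = (fun _ => (0:ℝ≥0∞)) x := by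
        intro x hx
        have hwx : w x = 0 := hx.1.1
        simp [hσ, hwx]
      rw [setLIntegral_congr_fun hZm heq, lintegral_zero]
    rw [h1]
    exact ENNReal.zero_rpow_of_pos (by norm_num)
  have hXzero : ennW2 σ (Mreal f₀) = 0 := ennW2_Mreal_zero hM hl2z
  -- but ennW2 σ (Mreal f₀) > 0
  set K := (m:ℝ) + k + 1 with hKdef
  have hKpos : (0:ℝ) < K := by positivity
  have hZsub : Z ⊆ Set.Ico (-K) K := fun x hx =>
    ⟨by have := hx.1.2.1; simp only [hKdef]; linarith, by have := hx.1.2.2; simp only [hKdef]; linarith⟩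
  have hPsub : Pk ⊆ Set.Ico (-K) K := fun x hx =>
    ⟨by have := hx.1.2.1; simp only [hKdef]; linarith, by have := hx.1.2.2; simp only [hKdef]; linarith⟩
  have hMRlow : ∀ x ∈ Set.Ico (-K) K, volume Z / ENNReal.ofReal (2*K) ≤ Mreal f₀ x := by
    intro x hx
    unfold Mreal
    rw [hf₀, indicator_ofReal_abs]
    have := MR_window (u := Z.indicator (fun _ => (1:ℝ≥0∞))) hKpos hZsub hx
    rwa [setLIntegral_indicator_self hZm] at this
  set δ := volume Z / ENNReal.ofReal (2*K) with hδ
  have hδpos : 0 < δ := by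
    rw [hδ]
    refine ENNReal.div_pos (ne_of_gt hm) ENNReal.ofReal_ne_top
  have hIpos : 0 < ∫⁻ x, (Mreal f₀ x) ^ 2 * ENNReal.ofReal (σ x) := by
    refine lt_of_lt_of_le ?_ (setLIntegral_le_lintegral Pk _)
    refine setLIntegral_pos hPk hk ((measurable_MR.pow_const 2).mul hσm.ennreal_ofReal) ?_
    intro x hx
    have h1 : 0 < Mreal f₀ x := lt_of_lt_of_le hδpos (hMRlow x (hPsub hx))
    have h2 : 0 < σ x := by
      rw [hσ]
      exact inv_pos.2 hx.1.1
    exact ENNReal.mul_pos (pow_ne_zero 2 (ne_of_gt h1)) (ne_of_gt (ENNReal.ofReal_pos.2 h2))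
  have : ennW2 σ (Mreal f₀) ≠ 0 := by
    unfold ennW2
    intro h0
    rcases (ENNReal.rpow_eq_zero_iff).1 h0 with ⟨h1, _⟩ | ⟨_, h2⟩
    · exact absurd h1 (ne_of_gt hIpos)
    · norm_num at h2
  exact this hXzero

lemma hilbert_zero_of_ae_zero {f : ℝ → ℝ} (h : f =ᵐ[(volume : Measure ℝ)] 0) :
    hilbert f = 0 := by
  funext x
  unfold hilbert
  have hF : (fun ε : ℝ => ∫ y in {y : ℝ | ε < |x - y|}, f y / (x - y)) = fun _ => 0 := by
    funext ε
    refine integral_eq_zero_of_ae (ae_restrict_of_ae ?_)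
    filter_upwards [h] with y hy
    simp only [Pi.zero_apply] at hy
    simp [hy]
  rw [hF]
  exact Filter.Tendsto.limUnder_eq tendsto_const_nhds

lemma weakL2norm_zero (w : ℝ → ℝ) : weakL2norm w 0 = 0 := by
  unfold weakL2norm
  refine le_antisymm (iSup_le fun α => iSup_le fun hα => ?_) (zero_le)
  have h1 : {x : ℝ | α < |(0:ℝ → ℝ) x|} = ∅ := by
    ext x
    simp [not_lt.2 (le_of_lt hα)]
  rw [h1]
  simp [ENNReal.zero_rpow_of_pos (show (0:ℝ) < 1/2 by norm_num)]

lemma weakL2norm_of_ae_zero {w : ℝ → ℝ} (h : ∀ᵐ x ∂(volume : Measure ℝ), w x = 0)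
    (g : ℝ → ℝ) : weakL2norm w g = 0 := by
  unfold weakL2norm
  refine le_antisymm (iSup_le fun α => iSup_le fun hα => ?_) (zero_le)
  have h0 : ∫⁻ x, ENNReal.ofReal (w x) = 0 := by
    have : (fun x => ENNReal.ofReal (w x)) =ᵐ[(volume : Measure ℝ)] 0 := by
      filter_upwards [h] with x hx
      simp [hx]
    rw [lintegral_congr_ae this]
    simp
  have h1 : ∫⁻ x in {x : ℝ | α < |g x|}, ENNReal.ofReal (w x) = 0 :=
    le_antisymm (h0 ▸ setLIntegral_le_lintegral _ _) (zero_le)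
  rw [h1]
  simp [ENNReal.zero_rpow_of_pos (show (0:ℝ) < 1/2 by norm_num)]

lemma ennW2_MR_le {σ : ℝ → ℝ} (hM : Mopnorm σ < ⊤) (hN : Mopnorm σ ≠ 0)
    {u : ℝ → ℝ≥0∞} (hfin : ∀ᵐ x ∂(volume : Measure ℝ), u x ≠ ⊤) :
    ennW2 σ (MR u) ≤ Mopnorm σ * ennW2 σ u := by
  have h1 : (fun y => ENNReal.ofReal |(u y).toReal|) =ᵐ[(volume : Measure ℝ)] u := by
    filter_upwards [hfin] with y hy
    rw [abs_of_nonneg ENNReal.toReal_nonneg, ENNReal.ofReal_toReal hy]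
  have h2 : Mreal (fun y => (u y).toReal) = MR u := MR_congr_ae h1
  have h3 : l2w σ (fun y => (u y).toReal) = ennW2 σ u := by
    rw [l2w_eq_ennW2]; exact ennW2_congr_ae σ h1
  rw [← h2, ← h3]
  exact ennW2_Mreal_le hM hN _

lemma A1const_le_of_MR_le {v : ℝ → ℝ≥0∞} {C : ℝ≥0∞}
    (hfin : ∀ x, v x ≠ ⊤) (hpos : ∀ x, v x ≠ 0)
    (hMR : ∀ x, MR v x ≤ C * v x) :
    A1const (fun x => (v x).toReal) ≤ C := by
  unfold A1const
  refine essSup_le_of_ae_le C (Filter.Eventually.of_forall fun x => ?_)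
  have h1 : Mreal (fun y => (v y).toReal) = MR v := by
    unfold Mreal
    have h2 : (fun y => ENNReal.ofReal |(v y).toReal|) = v := by
      funext y
      rw [abs_of_nonneg ENNReal.toReal_nonneg, ENNReal.ofReal_toReal (hfin y)]
    rw [h2]
  show Mreal (fun y => (v y).toReal) x / ENNReal.ofReal ((v x).toReal) ≤ C
  rw [h1, ENNReal.ofReal_toReal (hfin x), ENNReal.div_le_iff (hpos x) (hfin x)]
  exact hMR x

end AuxLemmas

/-- Extrapolated weak type `(2,2)` bound:
`‖Hf‖_{L^{2,∞}(w)} ≤ 2 φ_H(2‖M‖_{L²(σ)→L²(σ)}) ‖f‖_{L²(w)}` where `σ = w⁻¹`. -/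
theorem weakL2_hilbert_bound (w σ : ℝ → ℝ) (hw : 0 ≤ w) (hwm : Measurable w)
    (hσ : σ = fun x => (w x)⁻¹) (hM : Mopnorm σ < ⊤)
    (f : ℝ → ℝ) (hfm : Measurable f) (hf : l2w w f < ⊤) :
    weakL2norm w (hilbert f) ≤ 2 * phiH (2 * Mopnorm σ) * l2w w f := by
  have hσm : Measurable σ := by rw [hσ]; exact hwm.inv
  by_cases hf0 : f =ᵐ[(volume : Measure ℝ)] 0
  · rw [hilbert_zero_of_ae_zero hf0, weakL2norm_zero]
    exact zero_le
  rcases w_dichotomy hw hwm hσ hM with hw0 | hwpos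
  · rw [weakL2norm_of_ae_zero hw0]
    exact zero_le
  -- main case
  have hσpos : ∀ᵐ x ∂(volume : Measure ℝ), 0 < σ x := by
    filter_upwards [hwpos] with x hx
    rw [hσ]
    exact inv_pos.2 hx
  set N := Mopnorm σ with hNdef
  have hN1 : (1:ℝ≥0∞) ≤ N := Mopnorm_ge_one hσm hσpos
  have hN0 : N ≠ 0 := fun h => by rw [h] at hN1; simp at hN1
  have hNt : N ≠ ⊤ := ne_of_lt hM
  have h2N0 : (2 : ℝ≥0∞) * N ≠ 0 := mul_ne_zero (by norm_num) hN0
  have h2Nt : (2 : ℝ≥0∞) * N ≠ ⊤ := ENNReal.mul_ne_top (by norm_num) hNt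
  have h2le : (2:ℝ≥0∞) ≤ 2 * N := by
    calc (2:ℝ≥0∞) = 2 * 1 := (mul_one 2).symm
      _ ≤ 2 * N := mul_le_mul_right hN1 2
  set F := l2w w f with hF
  have hFt : F ≠ ⊤ := ne_of_lt hf
  set φ := phiH (2 * N) with hφ
  set K := 2 * φ * F with hK
  show weakL2norm w (hilbert f) ≤ K
  unfold weakL2norm
  refine iSup_le fun α => iSup_le fun hα => ?_
  set E := {x : ℝ | α < |hilbert f x|} with hE
  have hoα0 : ENNReal.ofReal α ≠ 0 := by
    simp only [ne_eq, ENNReal.ofReal_eq_zero, not_le]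
    exact hα
  have hoαt : ENNReal.ofReal α ≠ ⊤ := ENNReal.ofReal_ne_top
  set B : ℕ → Set ℝ := fun n => Set.Icc (-(n:ℝ)) n ∩ {x | w x ≤ n} with hB
  have hBmeas : ∀ n, MeasurableSet (B n) := fun n =>
    measurableSet_Icc.inter (hwm measurableSet_Iic)
  set A : ℕ → ℝ≥0∞ := fun n => ∫⁻ x in E ∩ B n, ENNReal.ofReal (w x) with hA
  -- per-n bound
  have main : ∀ n, ENNReal.ofReal α * (A n) ^ (1/2:ℝ) ≤ K := by
    intro n
    by_cases hA0 : A n = 0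
    · rw [hA0, ENNReal.zero_rpow_of_pos (by norm_num), mul_zero]
      exact zero_le
    have hEnB : E ∩ B n ⊆ B n := Set.inter_subset_right
    have hvolEn : volume (E ∩ B n) ≠ ⊤ := by
      refine ne_of_lt (lt_of_le_of_lt
        (measure_mono (Set.Subset.trans hEnB Set.inter_subset_left)) ?_)
      rw [Real.volume_Icc]
      exact ENNReal.ofReal_lt_top
    set G := toMeasurable volume (E ∩ B n) ∩ B n with hG
    have hGmeas : MeasurableSet G := (measurableSet_toMeasurable _ _).inter (hBmeas n)
    have hsubG : E ∩ B n ⊆ G := Set.subset_inter (subset_toMeasurable _ _) hEnB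
    have hGB : G ⊆ B n := Set.inter_subset_right
    have hvolG : volume G = volume (E ∩ B n) :=
      le_antisymm
        (le_trans (measure_mono Set.inter_subset_left)
          (le_of_eq (measure_toMeasurable _)))
        (measure_mono hsubG)
    have hrestr : volume.restrict G = volume.restrict (E ∩ B n) :=
      restrict_hull hGmeas hsubG hvolG hvolEn
    set g₀ : ℝ → ℝ≥0∞ := G.indicator (fun x => ENNReal.ofReal (w x)) with hg₀
    have hg₀meas : Measurable g₀ := hwm.ennreal_ofReal.indicator hGmeas
    have hg₀le : ∀ x, g₀ x ≤ ENNReal.ofReal n := by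
      intro x
      by_cases hx : x ∈ G
      · rw [hg₀, Set.indicator_of_mem hx]
        exact ENNReal.ofReal_le_ofReal (hGB hx).2
      · rw [hg₀, Set.indicator_of_notMem hx]
        exact zero_le
    -- iterates
    set h : ℕ → ℝ → ℝ≥0∞ := fun k => MR^[k] g₀ with hh
    have hh0 : h 0 = g₀ := rfl
    have hhsucc : ∀ k, h (k+1) = MR (h k) := fun k => Function.iterate_succ_apply' MR k g₀
    have hhmeas : ∀ k, Measurable (h k) := by
      intro k
      induction k with
      | zero => exact hg₀meas
      | succ k ih => rw [hhsucc]; exact measurable_MR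
    have hhle : ∀ k x, h k x ≤ ENNReal.ofReal n := by
      intro k
      induction k with
      | zero => exact hg₀le
      | succ k ih =>
        rw [hhsucc]
        exact fun x => MR_le_const ih x
    set c : ℕ → ℝ≥0∞ := fun k => ((2 * N) ^ k)⁻¹ with hc
    have hck0 : ∀ k, c k ≠ 0 := fun k => ENNReal.inv_ne_zero.2 (pow_ne_top h2Nt)
    have hckt : ∀ k, c k ≠ ⊤ := fun k => ENNReal.inv_ne_top.2 (pow_ne_zero _ h2N0)
    have hcsucc : ∀ k, c k = (2 * N) * c (k+1) := by
      intro k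
      have h1 : c (k+1) = c k * (2*N)⁻¹ := by
        show ((2*N : ℝ≥0∞) ^ (k+1))⁻¹ = ((2*N : ℝ≥0∞) ^ k)⁻¹ * (2*N)⁻¹
        rw [pow_succ, ENNReal.mul_inv (Or.inr h2Nt) (Or.inr h2N0)]
      rw [h1, mul_comm (c k) _, ← mul_assoc, ENNReal.mul_inv_cancel h2N0 h2Nt, one_mul]
    set R : ℝ → ℝ≥0∞ := fun x => ∑' k, c k * h k x with hR
    have hRmeas : Measurable R := Measurable.ennreal_tsum fun k => (hhmeas k).const_mul _
    have hterm_le : ∀ k x, c k * h k x ≤ R x := fun k x => ENNReal.le_tsum k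
    have hg₀R : ∀ x, g₀ x ≤ R x := by
      intro x
      have h1 := hterm_le 0 x
      have h2 : c 0 * h 0 x = g₀ x := by
        rw [hh0, hc]
        simp
      rwa [h2] at h1
    have hcsum : (∑' k, c k) ≤ 2 := by
      have h1 : ∀ k, c k ≤ 2⁻¹ ^ k := by
        intro k
        show ((2*N : ℝ≥0∞) ^ k)⁻¹ ≤ (2:ℝ≥0∞)⁻¹ ^ k
        rw [ENNReal.inv_pow]
        exact pow_le_pow_left' (ENNReal.inv_le_inv' h2le) k
      calc (∑' k, c k) ≤ ∑' k : ℕ, (2:ℝ≥0∞)⁻¹ ^ k := ENNReal.tsum_le_tsum h1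
        _ = ((1:ℝ≥0∞) - 2⁻¹)⁻¹ := ENNReal.tsum_geometric _
        _ = 2 := by rw [ENNReal.one_sub_inv_two, inv_inv]
    have hRle : ∀ x, R x ≤ 2 * ENNReal.ofReal n := by
      intro x
      calc R x ≤ ∑' k, c k * ENNReal.ofReal n :=
            ENNReal.tsum_le_tsum fun k => mul_le_mul_right (hhle k x) _
        _ = (∑' k, c k) * ENNReal.ofReal n := ENNReal.tsum_mul_right
        _ ≤ 2 * ENNReal.ofReal n := mul_le_mul_left hcsum _
    have hRt : ∀ x, R x ≠ ⊤ := fun x => ne_of_lt (lt_of_le_of_lt (hRle x)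
      (ENNReal.mul_lt_top (by norm_num) ENNReal.ofReal_lt_top))
    -- A n as an integral over G
    have hAnG : A n = ∫⁻ x in G, ENNReal.ofReal (w x) := by
      show (∫⁻ x in E ∩ B n, ENNReal.ofReal (w x)) = _
      rw [hrestr]
    have hAfin : A n ≠ ⊤ := by
      rw [hAnG]
      have h1 : (∫⁻ x in G, ENNReal.ofReal (w x)) ≤ ENNReal.ofReal n * volume G := by
        rw [← setLIntegral_const G (ENNReal.ofReal n)]
        refine lintegral_mono_ae ?_
        rw [ae_restrict_iff' hGmeas]
        exact Filter.Eventually.of_forall fun x hx => ENNReal.ofReal_le_ofReal (hGB hx).2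
      refine ne_of_lt (lt_of_le_of_lt h1 (ENNReal.mul_lt_top ENNReal.ofReal_lt_top ?_))
      rw [hvolG]
      exact lt_top_iff_ne_top.2 hvolEn
    -- positivity of MR g₀ everywhere
    have hMRg₀pos : ∀ x, 0 < MR g₀ x := by
      intro x
      set Kx := (n:ℝ) + 1 + |x| with hKx
      have hKxpos : (0:ℝ) < Kx := by positivity
      have hGsub : G ⊆ Set.Ico (-Kx) Kx := by
        intro y hy
        have h1 := (hGB hy).1
        have h2 := h1.1
        have h3 := h1.2
        have h4 := abs_nonneg x
        exact ⟨by simp only [hKx]; linarith, by simp only [hKx]; linarith⟩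
      have hxmem : x ∈ Set.Ico (-Kx) Kx := by
        have h4 := neg_abs_le x
        have h5 := le_abs_self x
        have h6 : (0:ℝ) ≤ (n:ℝ) := Nat.cast_nonneg n
        exact ⟨by simp only [hKx]; linarith, by simp only [hKx]; linarith⟩
      have hwin := MR_window (u := g₀) hKxpos hGsub hxmem
      have hint : (∫⁻ y in G, g₀ y) = A n := by
        rw [hAnG]
        refine setLIntegral_congr_fun hGmeas (fun y hy => ?_)
        rw [hg₀, Set.indicator_of_mem hy]
      rw [hint] at hwin
      exact lt_of_lt_of_le (ENNReal.div_pos hA0 ENNReal.ofReal_ne_top) hwin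
    have hRpos : ∀ x, R x ≠ 0 := by
      intro x
      have h1 : c 1 * h 1 x ≤ R x := hterm_le 1 x
      have h2 : h 1 = MR g₀ := by rw [hhsucc 0, hh0]
      refine ne_of_gt (lt_of_lt_of_le ?_ h1)
      refine ENNReal.mul_pos (hck0 1) ?_
      rw [h2]
      exact ne_of_gt (hMRg₀pos x)
    -- the L² norm of g₀
    have hennWg₀ : ennW2 σ g₀ = (A n) ^ (1/2:ℝ) := by
      unfold ennW2
      congr 1
      have hpt : ∀ x, g₀ x ^ 2 * ENNReal.ofReal (σ x) = g₀ x := by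
        intro x
        by_cases hx : x ∈ G
        · rw [hg₀, Set.indicator_of_mem hx]
          rcases le_or_gt (w x) 0 with h1 | h1
          · rw [ENNReal.ofReal_eq_zero.2 h1]
            simp
          · simp only [hσ]
            rw [ENNReal.ofReal_inv_of_pos h1, pow_two, mul_assoc,
              ENNReal.mul_inv_cancel (ne_of_gt (ENNReal.ofReal_pos.2 h1))
                ENNReal.ofReal_ne_top, mul_one]
        · rw [hg₀, Set.indicator_of_notMem hx]
          simp
      simp_rw [hpt]
      rw [hg₀, lintegral_indicator hGmeas, ← hAnG]
    -- L² bounds on the iterates and on R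
    have hhkN : ∀ k, ennW2 σ (h k) ≤ N ^ k * ennW2 σ g₀ := by
      intro k
      induction k with
      | zero => rw [hh0]; simp
      | succ k ih =>
        rw [hhsucc]
        calc ennW2 σ (MR (h k)) ≤ N * ennW2 σ (h k) :=
              ennW2_MR_le hM hN0 (Filter.Eventually.of_forall fun x =>
                ne_of_lt (lt_of_le_of_lt (hhle k x) ENNReal.ofReal_lt_top))
          _ ≤ N * (N ^ k * ennW2 σ g₀) := mul_le_mul_right ih _
          _ = N ^ (k+1) * ennW2 σ g₀ := by ring
    have hckN : ∀ k, c k * N ^ k = 2⁻¹ ^ k := by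
      intro k
      show ((2*N : ℝ≥0∞) ^ k)⁻¹ * N ^ k = 2⁻¹ ^ k
      rw [mul_pow, ENNReal.mul_inv (Or.inl (pow_ne_zero _ (by norm_num)))
        (Or.inl (pow_ne_top (by norm_num))), mul_assoc,
        ENNReal.inv_mul_cancel (pow_ne_zero k hN0) (pow_ne_top hNt), mul_one,
        ENNReal.inv_pow]
    have hennR : ennW2 σ R ≤ 2 * (A n) ^ (1/2:ℝ) := by
      calc ennW2 σ R ≤ ∑' k, ennW2 σ (fun x => c k * h k x) := by
            rw [hR]
            exact ennW2_tsum_le hσm (fun k => (hhmeas k).const_mul _)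
        _ = ∑' k, c k * ennW2 σ (h k) :=
            tsum_congr fun k => ennW2_const_mul σ _ (hckt k) _
        _ ≤ ∑' k, c k * (N ^ k * ennW2 σ g₀) :=
            ENNReal.tsum_le_tsum fun k => mul_le_mul_right (hhkN k) _
        _ = ∑' k, (2:ℝ≥0∞)⁻¹ ^ k * ennW2 σ g₀ :=
            tsum_congr fun k => by rw [← mul_assoc, hckN k]
        _ = (∑' k : ℕ, (2:ℝ≥0∞)⁻¹ ^ k) * ennW2 σ g₀ := ENNReal.tsum_mul_right
        _ = 2 * (A n) ^ (1/2:ℝ) := by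
            rw [ENNReal.tsum_geometric, ENNReal.one_sub_inv_two, inv_inv, hennWg₀]
    -- sublinearity: MR R ≤ 2N · R
    have hMRR : ∀ x, MR R x ≤ (2*N) * R x := by
      intro x
      calc MR R x ≤ ∑' k, MR (fun y => c k * h k y) x := by
            rw [hR]
            exact MR_tsum_le (fun k => (hhmeas k).const_mul _) x
        _ = ∑' k, (2*N) * (c (k+1) * h (k+1) x) := by
            refine tsum_congr fun k => ?_
            rw [MR_const_mul _ (hckt k), ← hhsucc k, hcsucc k]
            show 2 * N * c (k+1) * h (k+1) x = 2 * N * (c (k+1) * h (k+1) x)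
            ring
        _ = (2*N) * ∑' k, c (k+1) * h (k+1) x := ENNReal.tsum_mul_left
        _ ≤ (2*N) * R x := by
            refine mul_le_mul_right ?_ _
            rw [hR]
            exact ENNReal.tsum_comp_le_tsum_of_injective Nat.succ_injective
              (fun k => c k * h k x)
    -- Cauchy–Schwarz
    set L := ∫⁻ x, ENNReal.ofReal |f x| * R x with hL
    have hCS : L ≤ F * ennW2 σ R := by
      set f1 : ℝ → ℝ≥0∞ := fun x => ENNReal.ofReal |f x| * (ENNReal.ofReal (w x)) ^ (1/2:ℝ)
        with hf1
      set f2 : ℝ → ℝ≥0∞ := fun x => R x * (ENNReal.ofReal (σ x)) ^ (1/2:ℝ) with hf2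
      have hf1m : Measurable f1 := (hfm.abs.ennreal_ofReal).mul
        (hwm.ennreal_ofReal.pow_const _)
      have hf2m : Measurable f2 := hRmeas.mul (hσm.ennreal_ofReal.pow_const _)
      have hptw : ∀ᵐ x ∂(volume : Measure ℝ),
          ENNReal.ofReal |f x| * R x ≤ f1 x * f2 x := by
        filter_upwards [hwpos] with x hx
        refine le_of_eq ?_
        have h1 : (ENNReal.ofReal (w x)) ^ (1/2:ℝ) * (ENNReal.ofReal (σ x)) ^ (1/2:ℝ)
            = 1 := by
          rw [hσ]
          simp only []
          rw [ENNReal.ofReal_inv_of_pos hx,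
            ← ENNReal.mul_rpow_of_nonneg _ _ (by norm_num : (0:ℝ) ≤ 1/2),
            ENNReal.mul_inv_cancel (ne_of_gt (ENNReal.ofReal_pos.2 hx))
              ENNReal.ofReal_ne_top, ENNReal.one_rpow]
        calc ENNReal.ofReal |f x| * R x = (ENNReal.ofReal |f x| * R x) * 1 :=
              (mul_one _).symm
          _ = f1 x * f2 x := by rw [← h1, hf1, hf2]; ring
      have hHold := ENNReal.lintegral_mul_le_Lp_mul_Lq volume
        Real.HolderConjugate.two_two
        hf1m.aemeasurable hf2m.aemeasurable
      have hI1 : (∫⁻ x, f1 x ^ (2:ℝ)) ^ (1/(2:ℝ)) = F := by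
        rw [hF]
        unfold l2w
        congr 1
        refine lintegral_congr fun x => ?_
        rw [← pow_two_rpow, hf1]
        simp only []
        rw [mul_pow, rpow_half_sq]
      have hI2 : (∫⁻ x, f2 x ^ (2:ℝ)) ^ (1/(2:ℝ)) = ennW2 σ R := by
        unfold ennW2
        congr 1
        refine lintegral_congr fun x => ?_
        rw [← pow_two_rpow, hf2]
        simp only []
        rw [mul_pow, rpow_half_sq]
      calc L ≤ ∫⁻ x, f1 x * f2 x := lintegral_mono_ae hptw
        _ ≤ (∫⁻ x, f1 x ^ (2:ℝ)) ^ (1/(2:ℝ)) * (∫⁻ x, f2 x ^ (2:ℝ)) ^ (1/(2:ℝ)) := hHold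
        _ = F * ennW2 σ R := by rw [hI1, hI2]
    have hLt : L ≠ ⊤ := by
      refine ne_of_lt (lt_of_le_of_lt hCS ?_)
      refine ENNReal.mul_lt_top (lt_top_iff_ne_top.2 hFt) ?_
      refine lt_of_le_of_lt hennR (ENNReal.mul_lt_top (by norm_num) ?_)
      exact ENNReal.rpow_lt_top_of_nonneg (by norm_num) hAfin
    have hLpos : L ≠ 0 := by
      rw [hL]
      have hmeasL : Measurable (fun x => ENNReal.ofReal |f x| * R x) :=
        (hfm.abs.ennreal_ofReal).mul hRmeas
    -- support of the integrand is the support of f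
      intro h0
      have h1 : volume (Function.support fun x => ENNReal.ofReal |f x| * R x) = 0 := by
        by_contra h2
        have h3 := (lintegral_pos_iff_support hmeasL).2 (pos_iff_ne_zero.2 h2)
        rw [h0] at h3
        exact lt_irrefl 0 h3
      have h4 : Function.support (fun x => ENNReal.ofReal |f x| * R x)
          = {x | f x ≠ 0} := by
        ext x
        simp only [Function.mem_support, ne_eq, mul_eq_zero, not_or,
          ENNReal.ofReal_eq_zero, not_le, Set.mem_setOf_eq]
        constructor
        · intro hx
          have h5 := hx.1
          intro h6
          rw [h6] at h5
          simp at h5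
        · intro hx
          exact ⟨by positivity, hRpos x⟩
      rw [h4] at h1
      apply hf0
      rw [Filter.eventuallyEq_iff_exists_mem]
      refine ⟨{x | f x = 0}, ?_, fun x hx => hx⟩
      rw [MeasureTheory.mem_ae_iff]
      have h5 : {x : ℝ | f x = 0}ᶜ = {x | f x ≠ 0} := rfl
      rw [h5]
      exact h1
    -- scaled weight u'
    set u' : ℝ → ℝ := fun x => (L⁻¹ * R x).toReal with hu'
    have hvfin : ∀ x, L⁻¹ * R x ≠ ⊤ :=
      fun x => ENNReal.mul_ne_top (ENNReal.inv_ne_top.2 hLpos) (hRt x)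
    have hvpos : ∀ x, L⁻¹ * R x ≠ 0 :=
      fun x => mul_ne_zero (ENNReal.inv_ne_zero.2 hLt) (hRpos x)
    have hu'0 : (0:ℝ → ℝ) ≤ u' := fun x => ENNReal.toReal_nonneg
    have hofu' : ∀ x, ENNReal.ofReal (u' x) = L⁻¹ * R x :=
      fun x => ENNReal.ofReal_toReal (hvfin x)
    have hA1' : A1const u' ≤ 2 * N := by
      refine A1const_le_of_MR_le hvfin hvpos ?_
      intro x
      rw [MR_const_mul _ (ENNReal.inv_ne_top.2 hLpos)]
      calc L⁻¹ * MR R x ≤ L⁻¹ * ((2*N) * R x) := mul_le_mul_right (hMRR x) _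
        _ = (2*N) * (L⁻¹ * R x) := by ring
    have hHop : Hopnorm u' ≤ φ := by
      rw [hφ]
      unfold phiH
      exact le_iSup_of_le u' (le_iSup_of_le hu'0 (le_iSup_of_le hA1' le_rfl))
    have hl1u' : l1w u' f = 1 := by
      unfold l1w
      calc (∫⁻ x, ENNReal.ofReal |f x| * ENNReal.ofReal (u' x))
          = ∫⁻ x, L⁻¹ * (ENNReal.ofReal |f x| * R x) := by
            refine lintegral_congr fun x => ?_
            rw [hofu' x]
            ring
        _ = L⁻¹ * L := by
            rw [lintegral_const_mul' _ _ (ENNReal.inv_ne_top.2 hLpos), hL]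
        _ = 1 := ENNReal.inv_mul_cancel hLpos hLt
    have hwk : weakL1norm u' (hilbert f) ≤ φ := by
      refine le_trans ?_ hHop
      unfold Hopnorm
      exact le_iSup_of_le f (le_iSup_of_le (le_of_eq hl1u') le_rfl)
    have hwkterm : ENNReal.ofReal α * ∫⁻ x in E, ENNReal.ofReal (u' x) ≤ φ := by
      refine le_trans ?_ hwk
      unfold weakL1norm
      rw [hE]
      exact le_iSup_of_le α (le_iSup_of_le hα le_rfl)
    -- main chain
    have hchain1 : A n ≤ ∫⁻ x in E, R x := by
      calc A n = ∫⁻ x in G, ENNReal.ofReal (w x) := hAnG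
        _ ≤ ∫⁻ x in G, R x := by
            refine lintegral_mono_ae ?_
            rw [ae_restrict_iff' hGmeas]
            refine Filter.Eventually.of_forall fun x hx => ?_
            have h1 : g₀ x = ENNReal.ofReal (w x) := Set.indicator_of_mem hx _
            rw [← h1]
            exact hg₀R x
        _ = ∫⁻ x in E ∩ B n, R x := by rw [hrestr]
        _ ≤ ∫⁻ x in E, R x :=
            lintegral_mono' (Measure.restrict_mono Set.inter_subset_left le_rfl) le_rfl
    have hER : (∫⁻ x in E, R x) = L * ∫⁻ x in E, ENNReal.ofReal (u' x) := by
      have h1 : (∫⁻ x in E, ENNReal.ofReal (u' x)) = L⁻¹ * ∫⁻ x in E, R x := by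
        calc (∫⁻ x in E, ENNReal.ofReal (u' x)) = ∫⁻ x in E, L⁻¹ * R x :=
              lintegral_congr fun x => hofu' x
          _ = L⁻¹ * ∫⁻ x in E, R x :=
              lintegral_const_mul' _ _ (ENNReal.inv_ne_top.2 hLpos)
      rw [h1, ← mul_assoc, ENNReal.mul_inv_cancel hLpos hLt, one_mul]
    have h2 : (∫⁻ x in E, ENNReal.ofReal (u' x)) ≤ φ * (ENNReal.ofReal α)⁻¹ := by
      have h3 : (∫⁻ x in E, ENNReal.ofReal (u' x)) * ENNReal.ofReal α ≤ φ := by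
        rw [mul_comm]
        exact hwkterm
      have h4 := (ENNReal.le_div_iff_mul_le (Or.inl hoα0) (Or.inl hoαt)).2 h3
      rwa [ENNReal.div_eq_inv_mul, mul_comm] at h4
    have hfinal : A n ≤ (F * (2 * (A n) ^ (1/2:ℝ))) * (φ * (ENNReal.ofReal α)⁻¹) := by
      calc A n ≤ ∫⁻ x in E, R x := hchain1
        _ = L * ∫⁻ x in E, ENNReal.ofReal (u' x) := hER
        _ ≤ (F * ennW2 σ R) * (φ * (ENNReal.ofReal α)⁻¹) := mul_le_mul' hCS h2
        _ ≤ (F * (2 * (A n) ^ (1/2:ℝ))) * (φ * (ENNReal.ofReal α)⁻¹) :=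
            mul_le_mul_left (mul_le_mul_right hennR _) _
    set s := (A n) ^ (1/2:ℝ) with hs
    have hs0 : s ≠ 0 := by
      rw [hs]
      intro h0
      rcases ENNReal.rpow_eq_zero_iff.1 h0 with ⟨h1, _⟩ | ⟨_, h2⟩
      · exact hA0 h1
      · norm_num at h2
    have hst : s ≠ ⊤ := by
      rw [hs]
      exact ne_of_lt (ENNReal.rpow_lt_top_of_nonneg (by norm_num) hAfin)
    have hAss : A n = s * s := by rw [hs, ← pow_two, rpow_half_sq]
    have hfinal2 : s * s ≤ (F * 2 * (φ * (ENNReal.ofReal α)⁻¹)) * s := by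
      calc s * s = A n := hAss.symm
        _ ≤ (F * (2 * s)) * (φ * (ENNReal.ofReal α)⁻¹) := hfinal
        _ = (F * 2 * (φ * (ENNReal.ofReal α)⁻¹)) * s := by ring
    have hss : s ≤ F * 2 * (φ * (ENNReal.ofReal α)⁻¹) :=
      (ENNReal.mul_le_mul_iff_left hs0 hst).1 hfinal2
    calc ENNReal.ofReal α * s
        ≤ ENNReal.ofReal α * (F * 2 * (φ * (ENNReal.ofReal α)⁻¹)) :=
          mul_le_mul_right hss _
      _ = (2 * φ * F) * (ENNReal.ofReal α * (ENNReal.ofReal α)⁻¹) := by ring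
      _ = K := by rw [ENNReal.mul_inv_cancel hoα0 hoαt, mul_one, hK]
  -- combine in n
  have hsup : (∫⁻ x in E, ENNReal.ofReal (w x)) ≤ ⨆ n, A n := by
    have hWsup : ∀ x, ENNReal.ofReal (w x)
        = ⨆ n, (B n).indicator (fun y => ENNReal.ofReal (w y)) x := by
      intro x
      apply le_antisymm
      · obtain ⟨n, hn1, hn2⟩ : ∃ n : ℕ, |x| ≤ n ∧ w x ≤ n := by
          obtain ⟨n, hn⟩ := exists_nat_ge (max |x| (w x))
          exact ⟨n, le_trans (le_max_left _ _) hn, le_trans (le_max_right _ _) hn⟩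
        have hxB : x ∈ B n := ⟨⟨(abs_le.1 hn1).1, (abs_le.1 hn1).2⟩, hn2⟩
        exact le_iSup_of_le n
          (le_of_eq (Set.indicator_of_mem hxB (fun y => ENNReal.ofReal (w y))).symm)
      · exact iSup_le fun n => Set.indicator_le_self _ _ x
    have hmono : Monotone fun n => (B n).indicator (fun y => ENNReal.ofReal (w y)) := by
      intro i j hij x
      have hBij : B i ⊆ B j := by
        refine Set.inter_subset_inter (Set.Icc_subset_Icc ?_ ?_) ?_
        · exact neg_le_neg (Nat.cast_le.2 hij)
        · exact Nat.cast_le.2 hij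
        · intro y hy
          simp only [Set.mem_setOf_eq] at hy ⊢
          exact le_trans hy (Nat.cast_le.2 hij)
      exact Set.indicator_le_indicator_of_subset hBij (fun y => zero_le) x
    calc (∫⁻ x in E, ENNReal.ofReal (w x))
        = ∫⁻ x in E, ⨆ n, (B n).indicator (fun y => ENNReal.ofReal (w y)) x :=
          lintegral_congr fun x => hWsup x
      _ = ⨆ n, ∫⁻ x in E, (B n).indicator (fun y => ENNReal.ofReal (w y)) x :=
          lintegral_iSup (fun n => hwm.ennreal_ofReal.indicator (hBmeas n)) hmono
      _ ≤ ⨆ n, A n := by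
          refine iSup_le fun n => le_iSup_of_le n ?_
          rw [lintegral_indicator (hBmeas n), Measure.restrict_restrict (hBmeas n),
            Set.inter_comm]
  have hAKα : (∫⁻ x in E, ENNReal.ofReal (w x)) ^ (1/2:ℝ) ≤ K / ENNReal.ofReal α := by
    have h1 : ∀ n, A n ≤ (K / ENNReal.ofReal α) ^ 2 := by
      intro n
      have h2 : (A n) ^ (1/2:ℝ) ≤ K / ENNReal.ofReal α := by
        rw [ENNReal.le_div_iff_mul_le (Or.inl hoα0) (Or.inl hoαt), mul_comm]
        exact main n
      calc A n = ((A n) ^ (1/2:ℝ)) ^ 2 := (rpow_half_sq _).symm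
        _ ≤ (K / ENNReal.ofReal α) ^ 2 := pow_le_pow_left' h2 2
    calc (∫⁻ x in E, ENNReal.ofReal (w x)) ^ (1/2:ℝ)
        ≤ ((K / ENNReal.ofReal α) ^ 2) ^ (1/2:ℝ) :=
          ENNReal.rpow_le_rpow (le_trans hsup (iSup_le h1)) (by norm_num)
      _ = K / ENNReal.ofReal α := sq_rpow_half _
  calc ENNReal.ofReal α * (∫⁻ x in E, ENNReal.ofReal (w x)) ^ (1/2:ℝ)
      ≤ ENNReal.ofReal α * (K / ENNReal.ofReal α) := mul_le_mul_right hAKα _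
    _ = K := by
        rw [mul_comm, ENNReal.div_mul_cancel hoα0 hoαt]
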